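/- Let λ ∈ ℂ∖[−2,2] and z ∈ D∖{0} with λ = z + 1/z. Then there exist absolute constants c, C > 0 (depending only on a lower bound δ for |z|) such that c·(1−|z|)·|1−z²| ≤ dist(λ, [−2,2]) ≤ C·(1−|z|)·|1−z²|. -/

import Mathlib

open Complex Metric

/-- The segment `[−2,2]` viewed as a subset of `ℂ`. -/
def segTwo : Set ℂ := (fun x : ℝ => (x : ℂ)) '' Set.Icc (-2 : ℝ) 2

private lemma seg_mem {t : ℝ} (h1 : -2 ≤ t) (h2 : t ≤ 2) : (t : ℂ) ∈ segTwo :=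
  ⟨t, ⟨h1, h2⟩, rfl⟩

private lemma jid {z w : ℂ} (hz : z ≠ 0) (hw : w * (starRingEnd ℂ) w = 1) :
    z + 1/z - (w + (starRingEnd ℂ) w) = (z - w) * (z - (starRingEnd ℂ) w) / z := by
  field_simp
  linear_combination -hw

private lemma lower_pt {δ : ℝ} (hδ0 : 0 < δ) {z w : ℂ} (hδz : δ ≤ ‖z‖)
    (hz1 : ‖z‖ < 1) (hw : w * (starRingEnd ℂ) w = 1) :
    δ / 2 * ((1 - ‖z‖) * ‖1 - z ^ 2‖) ≤
      ‖z + 1/z - (w + (starRingEnd ℂ) w)‖ := by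
  set a := ‖z‖ with ha
  have ha0 : 0 < a := lt_of_lt_of_le hδ0 hδz
  have hz0 : z ≠ 0 := by
    intro h; rw [h] at ha; simp [ha] at ha0
  have hww : ‖w‖ * ‖w‖ = 1 := by
    have := congrArg (‖·‖) hw
    simpa [norm_mul, Complex.norm_conj] using this
  have habsw : ‖w‖ = 1 := by nlinarith [norm_nonneg w]
  set A := ‖z - w‖ with hAdef
  set B := ‖z - (starRingEnd ℂ) w‖ with hBdef
  set D := ‖z - 1/z‖ with hDdef
  have hA : 1 - a ≤ A := by
    have h := norm_sub_norm_le w z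
    rw [norm_sub_rev] at h
    simpa [hAdef, habsw, ha] using h
  have hB : 1 - a ≤ B := by
    have h := norm_sub_norm_le ((starRingEnd ℂ) w) z
    rw [norm_sub_rev] at h
    simpa [hBdef, Complex.norm_conj, habsw, ha] using h
  have key : z * ((starRingEnd ℂ) w - 1/z) = (starRingEnd ℂ) w * (z - w) := by
    field_simp
    linear_combination hw
  have hE : A = a * ‖(starRingEnd ℂ) w - 1/z‖ := by
    rw [hAdef, ha, ← norm_mul, key, norm_mul, Complex.norm_conj, habsw, one_mul]
  have tri : D ≤ B + ‖(starRingEnd ℂ) w - 1/z‖ := by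
    have h := norm_sub_le_norm_sub_add_norm_sub z ((starRingEnd ℂ) w) (1/z)
    simpa [hDdef, hBdef] using h
  have hEnn : (0:ℝ) ≤ ‖(starRingEnd ℂ) w - 1/z‖ := norm_nonneg _
  have hD : δ * D ≤ A + B := by
    have hδ1 : δ ≤ 1 := le_of_lt (lt_of_le_of_lt hδz hz1)
    nlinarith [norm_nonneg (z - w), norm_nonneg (z - (starRingEnd ℂ) w),
      norm_nonneg (z - 1/z)]
  have h12 : (1 : ℂ) - z ^ 2 = -(z * (z - 1/z)) := by field_simp; ring
  have habs : ‖1 - z ^ 2‖ = a * D := by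
    rw [h12, norm_neg, norm_mul, ← ha, ← hDdef]
  have hT : ‖z + 1/z - (w + (starRingEnd ℂ) w)‖ = A * B / a := by
    rw [jid hz0 hw, norm_div, norm_mul, ← ha, ← hAdef, ← hBdef]
  rw [habs, hT, le_div_iff₀ ha0]
  have hAn : (0:ℝ) ≤ A := norm_nonneg _
  have hBn : (0:ℝ) ≤ B := norm_nonneg _
  have hDn : (0:ℝ) ≤ D := norm_nonneg _
  have h1a : (0:ℝ) ≤ 1 - a := by linarith
  have h2AB : (1 - a) * (A + B) ≤ 2 * (A * B) := by nlinarith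
  have haa : a * a ≤ 1 := by nlinarith
  have h3 : (1 - a) * (δ * D) ≤ 2 * (A * B) := le_trans (mul_le_mul_of_nonneg_left hD h1a) h2AB
  have hnn : (0:ℝ) ≤ δ * ((1 - a) * D) := by positivity
  have h4 : δ * ((1 - a) * D) * (a * a) ≤ δ * ((1 - a) * D) * 1 := mul_le_mul_of_nonneg_left haa hnn
  nlinarith [h3, h4]

/-- Lemma 3, first relation: under the Joukowski map `λ = z + 1/z` with `δ ≤ |z| < 1`,
`dist(λ,[−2,2]) ≍ (1−|z|)·|1−z²|`, with constants depending only on `δ`. -/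
theorem joukowski_dist_comparison (δ : ℝ) (hδ0 : 0 < δ) (hδ1 : δ < 1) :
    ∃ c C : ℝ, 0 < c ∧ 0 < C ∧ ∀ z : ℂ, δ ≤ ‖z‖ → ‖z‖ < 1 →
      c * ((1 - ‖z‖) * ‖1 - z ^ 2‖) ≤
        Metric.infDist (z + 1 / z) segTwo ∧
      Metric.infDist (z + 1 / z) segTwo ≤
        C * ((1 - ‖z‖) * ‖1 - z ^ 2‖) := by
  refine ⟨δ / 2, (δ + 1) / δ ^ 3, by positivity, by positivity, ?_⟩
  intro z hδz hz1
  set a := ‖z‖ with ha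
  have ha0 : 0 < a := lt_of_lt_of_le hδ0 hδz
  have hz0 : z ≠ 0 := by
    intro h; rw [h] at ha; simp [ha] at ha0
  have hne : segTwo.Nonempty := ⟨(0:ℂ), seg_mem (by norm_num) (by norm_num)⟩
  constructor
  · -- lower bound
    by_contra hcon
    push_neg at hcon
    rw [Metric.infDist_lt_iff hne] at hcon
    obtain ⟨y, ⟨t, ⟨ht1, ht2⟩, rfl⟩, hlt⟩ := hcon
    set s := Real.sqrt (1 - (t/2)^2) with hs
    have hs2 : s ^ 2 = 1 - (t/2)^2 := Real.sq_sqrt (by nlinarith)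
    set w : ℂ := (t/2 : ℝ) + (s : ℝ) * Complex.I with hwdef
    have hcw : (starRingEnd ℂ) w = (t/2 : ℝ) - (s : ℝ) * Complex.I := by
      rw [hwdef, map_add, map_mul, Complex.conj_ofReal, Complex.conj_ofReal, Complex.conj_I]
      ring
    have hw : w * (starRingEnd ℂ) w = 1 := by
      rw [hcw, hwdef]
      have : ((t/2 : ℝ) + (s:ℝ) * Complex.I) * ((t/2 : ℝ) - (s:ℝ) * Complex.I)
          = (((t/2)^2 + s^2 : ℝ) : ℂ) := by
        push_cast
        ring_nf
        rw [Complex.I_sq]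
        ring
      rw [this, hs2]
      norm_num
    have hwt : w + (starRingEnd ℂ) w = (t : ℂ) := by
      rw [hcw, hwdef]; push_cast; ring
    have hpt := lower_pt hδ0 hδz hz1 hw
    rw [hwt] at hpt
    have hdist : dist (z + 1/z) ((t:ℂ)) = ‖z + 1/z - t‖ := Complex.dist_eq _ _
    rw [hdist] at hlt
    rw [← ha] at hpt
    linarith
  · -- upper bound
    set t : ℝ := 2 * z.re / a with htdef
    have htre : |z.re| ≤ a := Complex.abs_re_le_norm z
    have ht1 : -2 ≤ t := by
      rw [htdef, neg_le, ← neg_div]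
      rw [div_le_iff₀ ha0]
      have := (abs_le.1 htre).1
      linarith
    have ht2 : t ≤ 2 := by
      rw [htdef, div_le_iff₀ ha0]
      have := (abs_le.1 htre).2
      linarith
    set w : ℂ := z / (a : ℂ) with hwdef
    have haC : (a : ℂ) ≠ 0 := by exact_mod_cast ha0.ne'
    have hw : w * (starRingEnd ℂ) w = 1 := by
      rw [hwdef]
      rw [map_div₀, Complex.conj_ofReal]
      rw [div_mul_div_comm, Complex.mul_conj]
      rw [Complex.normSq_eq_norm_sq, ← ha]
      have : ((a:ℂ) * (a:ℂ)) = ((a^2 : ℝ) : ℂ) := by push_cast; ring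
      rw [this]
      rw [div_eq_one_iff_eq (by exact_mod_cast pow_ne_zero 2 ha0.ne')]
    have hwt : w + (starRingEnd ℂ) w = (t : ℂ) := by
      rw [hwdef, map_div₀, Complex.conj_ofReal, ← add_div, Complex.add_conj, htdef]
      push_cast; ring
    have hmem : (t : ℂ) ∈ segTwo := seg_mem ht1 ht2
    have hle := Metric.infDist_le_dist_of_mem (x := z + 1/z) hmem
    have hdist : dist (z + 1/z) ((t:ℂ)) = ‖z + 1/z - t‖ := Complex.dist_eq _ _
    rw [hdist, ← hwt, jid hz0 hw] at hle
    -- compute the pieces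
    set D := ‖z - 1/z‖ with hDdef
    have hA : ‖z - w‖ = 1 - a := by
      have h0 : z - w = z * (((a - 1)/a : ℝ) : ℂ) := by
        rw [hwdef]; push_cast; field_simp
      rw [h0, norm_mul, Complex.norm_real, Real.norm_eq_abs, ← ha,
        abs_of_nonpos (div_nonpos_of_nonpos_of_nonneg (by linarith) ha0.le)]
      field_simp
      ring
    have hDlow : 1 - a ≤ D := by
      have h := norm_sub_norm_le (1/z) z
      rw [norm_sub_rev] at h
      have h1z : ‖1/z‖ = 1/a := by
        simp [← ha]
      rw [h1z, ← ha] at h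
      have : 1 - a ≤ 1/a - a := by
        have : 1 ≤ 1/a := by
          rw [le_div_iff₀ ha0]; linarith
        linarith
      rw [hDdef]
      calc 1 - a ≤ 1/a - a := this
        _ ≤ ‖z - 1/z‖ := by simpa using h
    have hgap : ‖1/z - (starRingEnd ℂ) w‖ = (1 - a)/a := by
      have hzinv : (1 : ℂ)/z = (starRingEnd ℂ) z / (((a^2 : ℝ)) : ℂ) := by
        rw [eq_div_iff (by exact_mod_cast pow_ne_zero 2 ha0.ne')]
        rw [one_div, inv_mul_eq_div, div_eq_iff hz0]
        rw [mul_comm, Complex.mul_conj, Complex.normSq_eq_norm_sq, ← ha]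
      have : (1:ℂ)/z - (starRingEnd ℂ) w = (starRingEnd ℂ) z * (((1 - a)/a^2 : ℝ) : ℂ) := by
        rw [hwdef, map_div₀, Complex.conj_ofReal, hzinv]
        push_cast
        field_simp
      rw [this, norm_mul, Complex.norm_conj, Complex.norm_real, Real.norm_eq_abs, ← ha,
        _root_.abs_of_nonneg (div_nonneg (by linarith) (sq_nonneg a))]
      field_simp
    have hB : ‖z - (starRingEnd ℂ) w‖ ≤ D + (1 - a)/a := by
      have h := norm_sub_le_norm_sub_add_norm_sub z (1/z) ((starRingEnd ℂ) w)
      rw [hgap] at h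
      exact h
    have habs : ‖1 - z ^ 2‖ = a * D := by
      have h12 : (1 : ℂ) - z ^ 2 = -(z * (z - 1/z)) := by field_simp; ring
      rw [h12, norm_neg, norm_mul, ← ha, ← hDdef]
    have hfin : ‖(z - w) * (z - (starRingEnd ℂ) w) / z‖
        = (1 - a) * ‖z - (starRingEnd ℂ) w‖ / a := by
      rw [norm_div, norm_mul, hA, ← ha]
    rw [hfin] at hle
    refine hle.trans ?_
    rw [habs]
    rw [div_le_iff₀ ha0]
    have hBn : (0:ℝ) ≤ ‖z - (starRingEnd ℂ) w‖ := norm_nonneg _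
    have hDn : (0:ℝ) ≤ D := norm_nonneg _
    have h1a : (0:ℝ) ≤ 1 - a := by linarith
    have hgapD : (1 - a)/a ≤ D/δ :=
      div_le_div₀ hDn hDlow hδ0 hδz
    have hB2 : ‖z - (starRingEnd ℂ) w‖ ≤ D + D/δ := le_trans hB (by linarith)
    -- goal: (1-a) * B ≤ (δ+1)/δ^3 * ((1-a)*(a*D)) * a
    have hδa2 : δ^2 ≤ a^2 := by nlinarith
    have hstep : (1 - a) * ‖z - (starRingEnd ℂ) w‖ ≤ (1 - a) * (D + D/δ) :=
      mul_le_mul_of_nonneg_left hB2 h1a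
    refine hstep.trans ?_
    have e1 : (1 - a) * (D + D/δ) = ((1 - a) * (D * (δ + 1))) / δ := by
      field_simp
    have e2 : (δ + 1) / δ ^ 3 * ((1 - a) * (a * D)) * a
        = ((δ + 1) * ((1 - a) * (a * D)) * a) / δ ^ 3 := by ring
    rw [e1, e2, div_le_div_iff₀ hδ0 (by positivity : (0:ℝ) < δ ^ 3)]
    have hKnn : (0:ℝ) ≤ (δ + 1) * ((1 - a) * D) * δ := by positivity
    have hkey := mul_le_mul_of_nonneg_left hδa2 hKnn
    calc (1 - a) * (D * (δ + 1)) * δ ^ 3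
        = (δ + 1) * ((1 - a) * D) * δ * δ ^ 2 := by ring
      _ ≤ (δ + 1) * ((1 - a) * D) * δ * a ^ 2 := hkey
      _ = (δ + 1) * ((1 - a) * (a * D)) * a * δ := by ring
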